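/- Let A be a real m×n matrix with singular value decomposition A = U Σ Vᵀ, where U, V are orthogonal and Σ has nonincreasing nonnegative diagonal entries σ₁ ≥ σ₂ ≥ ⋯. Let 1 ≤ K < min(m,n) and suppose σ_K > σ_{K+1}. Then the minimizer of ‖A − X‖_F over all m×n real matrices X with rank(X) ≤ K is unique, and it equals X* = Σ_{k=1}^{K} σ_k u_k v_kᵀ. -/

import Mathlib

open Matrix

/-- Frobenius norm of a real matrix. -/
noncomputable def frob {m n : ℕ} (M : Matrix (Fin m) (Fin n) ℝ) : ℝ :=
  Real.sqrt (∑ i, ∑ j, (M i j) ^ 2)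

namespace EYM


noncomputable def frobSq {m n : ℕ} (M : Matrix (Fin m) (Fin n) ℝ) : ℝ :=
  ∑ i, ∑ j, (M i j) ^ 2

lemma frob_eq {m n : ℕ} (M : Matrix (Fin m) (Fin n) ℝ) : frob M = Real.sqrt (frobSq M) := rfl

lemma frobSq_nonneg {m n : ℕ} (M : Matrix (Fin m) (Fin n) ℝ) : 0 ≤ frobSq M := by
  apply Finset.sum_nonneg; intro i _; apply Finset.sum_nonneg; intro j _; positivity

lemma frobSq_eq_zero {m n : ℕ} {M : Matrix (Fin m) (Fin n) ℝ} (h : frobSq M = 0) : M = 0 := by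
  ext i j
  have h1 : ∀ i ∈ Finset.univ, (0:ℝ) ≤ ∑ j, (M i j)^2 := by
    intro i _; apply Finset.sum_nonneg; intro j _; positivity
  have h2 := (Finset.sum_eq_zero_iff_of_nonneg h1).1 h i (Finset.mem_univ i)
  have h3 : ∀ j ∈ Finset.univ, (0:ℝ) ≤ (M i j)^2 := by intro j _; positivity
  have := (Finset.sum_eq_zero_iff_of_nonneg h3).1 h2 j (Finset.mem_univ j)
  simpa using pow_eq_zero_iff (n := 2) (by norm_num) |>.1 this

lemma frob_le_frob {m n : ℕ} {M N : Matrix (Fin m) (Fin n) ℝ} (h : frobSq M ≤ frobSq N) :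
    frob M ≤ frob N := Real.sqrt_le_sqrt h

lemma frobSq_le_of_frob_le {m n : ℕ} {M N : Matrix (Fin m) (Fin n) ℝ} (h : frob M ≤ frob N) :
    frobSq M ≤ frobSq N := by
  rw [frob_eq, frob_eq] at h
  nlinarith [Real.sq_sqrt (frobSq_nonneg M), Real.sq_sqrt (frobSq_nonneg N),
    Real.sqrt_nonneg (frobSq M), Real.sqrt_nonneg (frobSq N)]

lemma frobSq_eq_trace {m n : ℕ} (M : Matrix (Fin m) (Fin n) ℝ) :
    frobSq M = Matrix.trace (Mᵀ * M) := by
  unfold frobSq Matrix.trace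
  rw [Finset.sum_comm]
  apply Finset.sum_congr rfl
  intro j _
  simp [Matrix.mul_apply, Matrix.diag, pow_two]

lemma frobSq_conj {m n : ℕ} (U : Matrix (Fin m) (Fin m) ℝ) (V : Matrix (Fin n) (Fin n) ℝ)
    (hU : Uᵀ * U = 1) (hV : Vᵀ * V = 1) (M : Matrix (Fin m) (Fin n) ℝ) :
    frobSq (U * M * Vᵀ) = frobSq M := by
  rw [frobSq_eq_trace, frobSq_eq_trace]
  have h2 : Uᵀ * (U * (M * Vᵀ)) = M * Vᵀ := by rw [← Matrix.mul_assoc, hU, Matrix.one_mul]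
  have : (U * M * Vᵀ)ᵀ * (U * M * Vᵀ) = V * ((Mᵀ * M) * Vᵀ) := by
    simp only [Matrix.transpose_mul, Matrix.transpose_transpose, Matrix.mul_assoc, h2]
  rw [this, Matrix.trace_mul_comm, Matrix.mul_assoc, hV, Matrix.mul_one]

/-- Key scalar inequality with equality analysis. -/
lemma scalar_ineq (N K : ℕ) (σ : ℕ → ℝ) (q : ℕ → ℝ)
    (hσmono : ∀ i j : ℕ, i ≤ j → j < N → σ j ≤ σ i)
    (hσnonneg : ∀ i : ℕ, i < N → 0 ≤ σ i)
    (hK1 : 1 ≤ K) (hK : K < N)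
    (hgap : σ K < σ (K - 1))
    (hq0 : ∀ t, 0 ≤ q t) (hq1 : ∀ t, q t ≤ 1)
    (hqsum : ∑ t ∈ Finset.range N, q t ≤ (K : ℝ)) :
    (∑ t ∈ Finset.Ico K N, σ t ^ 2) ≤ ∑ t ∈ Finset.range N, σ t ^ 2 * (1 - q t) ∧
    ((∑ t ∈ Finset.range N, σ t ^ 2 * (1 - q t)) = ∑ t ∈ Finset.Ico K N, σ t ^ 2 →
      (∀ t, t < K → q t = 1) ∧ (∀ t, K ≤ t → t < N → q t = 0)) := by
  have hKN : K ≤ N := le_of_lt hK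
  have hsplit : ∀ f : ℕ → ℝ, ∑ t ∈ Finset.range N, f t
      = ∑ t ∈ Finset.range K, f t + ∑ t ∈ Finset.Ico K N, f t := by
    intro f
    simp only [Finset.range_eq_Ico]
    exact (Finset.sum_Ico_consecutive _ (Nat.zero_le K) hKN).symm
  set a := σ (K-1) ^ 2 with ha
  set b := σ K ^ 2 with hb
  have hbK : 0 ≤ σ K := hσnonneg K hK
  have haK : 0 ≤ σ (K-1) := hσnonneg (K-1) (lt_of_le_of_lt (Nat.sub_le K 1) hK)
  have hab : b < a := by
    have := hgap; nlinarith
  have hA0 : (0:ℝ) ≤ ∑ t ∈ Finset.range K, (1 - q t) := by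
    apply Finset.sum_nonneg; intro t _; linarith [hq1 t]
  have hB0 : (0:ℝ) ≤ ∑ t ∈ Finset.Ico K N, q t := by
    apply Finset.sum_nonneg; intro t _; exact hq0 t
  set A := ∑ t ∈ Finset.range K, (1 - q t) with hA
  set B := ∑ t ∈ Finset.Ico K N, q t with hB
  have hBA : B ≤ A := by
    have h1 : ∑ t ∈ Finset.range K, q t + B ≤ (K:ℝ) := by
      rw [hB, ← hsplit]; exact hqsum
    have h2 : A = (K:ℝ) - ∑ t ∈ Finset.range K, q t := by
      rw [hA, Finset.sum_sub_distrib]; simp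
    linarith
  -- termwise bounds
  have hterm1 : a * A ≤ ∑ t ∈ Finset.range K, σ t ^ 2 * (1 - q t) := by
    rw [hA, Finset.mul_sum]
    apply Finset.sum_le_sum
    intro t ht
    have htK : t < K := Finset.mem_range.1 ht
    have h1 : σ (K-1) ≤ σ t := hσmono t (K-1) (by omega) (by omega)
    have h2 : 0 ≤ σ t := hσnonneg t (by omega)
    have h3 : a ≤ σ t ^ 2 := by nlinarith
    have h4 : 0 ≤ 1 - q t := by linarith [hq1 t]
    nlinarith
  have hterm2 : ∑ t ∈ Finset.Ico K N, σ t ^ 2 * q t ≤ b * B := by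
    rw [hB, Finset.mul_sum]
    apply Finset.sum_le_sum
    intro t ht
    obtain ⟨h1, h2⟩ := Finset.mem_Ico.1 ht
    have h3 : σ t ≤ σ K := hσmono K t h1 h2
    have h4 : 0 ≤ σ t := hσnonneg t h2
    have h5 : σ t ^ 2 ≤ b := by nlinarith
    nlinarith [hq0 t]
  have hdiff : ∑ t ∈ Finset.range N, σ t ^ 2 * (1 - q t) - ∑ t ∈ Finset.Ico K N, σ t ^ 2
      = ∑ t ∈ Finset.range K, σ t ^ 2 * (1 - q t) - ∑ t ∈ Finset.Ico K N, σ t ^ 2 * q t := by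
    rw [hsplit (fun t => σ t ^ 2 * (1 - q t))]
    have : ∑ t ∈ Finset.Ico K N, σ t ^ 2 * (1 - q t)
        = ∑ t ∈ Finset.Ico K N, σ t ^ 2 - ∑ t ∈ Finset.Ico K N, σ t ^ 2 * q t := by
      rw [← Finset.sum_sub_distrib]; apply Finset.sum_congr rfl; intro t _; ring
    rw [this]; ring
  have hmain : a * A - b * B ≤ ∑ t ∈ Finset.range N, σ t ^ 2 * (1 - q t)
      - ∑ t ∈ Finset.Ico K N, σ t ^ 2 := by rw [hdiff]; linarith
  have hlow : (a - b) * A ≤ a * A - b * B := by nlinarith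
  have hfinal : (0:ℝ) ≤ (a-b) * A := mul_nonneg (by linarith) hA0
  constructor
  · linarith
  · intro heq
    have hz : (a-b) * A = 0 := le_antisymm (by linarith) hfinal
    have hA0' : A = 0 := by
      rcases mul_eq_zero.1 hz with h | h
      · linarith
      · exact h
    have hB0' : B = 0 := by linarith
    have hq1' : ∀ t, t < K → q t = 1 := by
      intro t ht
      have := (Finset.sum_eq_zero_iff_of_nonneg (by
        intro x _; linarith [hq1 x] : ∀ x ∈ Finset.range K, (0:ℝ) ≤ 1 - q x)).1 hA0' t
        (Finset.mem_range.2 ht)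
      linarith
    refine ⟨hq1', ?_⟩
    intro t h1 h2
    have := (Finset.sum_eq_zero_iff_of_nonneg (by
      intro x _; exact hq0 x : ∀ x ∈ Finset.Ico K N, (0:ℝ) ≤ q x)).1 hB0' t
      (Finset.mem_Ico.2 ⟨h1, h2⟩)
    exact this



lemma sum_fin_single {M : ℕ} (g : Fin M → ℝ) (t : ℕ) :
    ∑ i : Fin M, (if (i : ℕ) = t then g i else 0)
      = if h : t < M then g ⟨t, h⟩ else 0 := by
  by_cases h : t < M
  · rw [dif_pos h]
    rw [Finset.sum_eq_single (⟨t, h⟩ : Fin M)]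
    · simp
    · intro b _ hb
      rw [if_neg]
      intro hc
      exact hb (Fin.ext hc)
    · intro hc; exact absurd (Finset.mem_univ _) hc
  · rw [dif_neg h]
    apply Finset.sum_eq_zero
    intro i _
    rw [if_neg]
    intro hc
    exact h (hc ▸ i.2)

lemma sum_fin_dite {m n : ℕ} (f : ℕ → ℝ) (hf : ∀ t, m ≤ t → f t = 0) :
    ∑ j : Fin n, f (j : ℕ) = ∑ t ∈ Finset.range (min m n), f t := by
  rw [Fin.sum_univ_eq_sum_range]
  symm
  apply Finset.sum_subset
  · intro t ht
    rw [Finset.mem_range] at *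
    omega
  · intro t ht hnt
    rw [Finset.mem_range] at *
    exact hf t (by omega)

/-- diagonal S: entry of M * S -/
lemma mul_diag_apply {m n : ℕ} (σ : ℕ → ℝ) (S : Matrix (Fin m) (Fin n) ℝ)
    (hS : ∀ (i : Fin m) (j : Fin n), S i j = if (i : ℕ) = (j : ℕ) then σ (i : ℕ) else 0)
    (M : Matrix (Fin m) (Fin m) ℝ) (i : Fin m) (j : Fin n) :
    (M * S) i j = if h : (j : ℕ) < m then M i ⟨(j : ℕ), h⟩ * σ (j : ℕ) else 0 := by
  rw [Matrix.mul_apply]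
  have h1 : ∀ a : Fin m, M i a * S a j
      = if (a : ℕ) = (j : ℕ) then (fun b : Fin m => M i b * σ (j:ℕ)) a else 0 := by
    intro a
    rw [hS]
    by_cases h : (a : ℕ) = (j : ℕ)
    · simp [if_pos h, h]
    · simp only [if_neg h, mul_zero]
  rw [Finset.sum_congr rfl (fun a _ => h1 a), sum_fin_single]

lemma pythagoras {m n : ℕ} (M N : Matrix (Fin m) (Fin n) ℝ)
    (h : Matrix.trace (Mᵀ * N) = 0) : frobSq (M + N) = frobSq M + frobSq N := by
  rw [frobSq_eq_trace, frobSq_eq_trace, frobSq_eq_trace]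
  have hexp : (M + N)ᵀ * (M + N) = Mᵀ * M + (Mᵀ * N + (Nᵀ * M + Nᵀ * N)) := by
    rw [Matrix.transpose_add, Matrix.add_mul, Matrix.mul_add, Matrix.mul_add]
    abel
  rw [hexp, Matrix.trace_add, Matrix.trace_add, Matrix.trace_add]
  have h2 : Matrix.trace (Nᵀ * M) = Matrix.trace (Mᵀ * N) := by
    rw [← Matrix.trace_transpose (Nᵀ * M), Matrix.transpose_mul, Matrix.transpose_transpose]
  rw [h2, h]
  ring

lemma col_sq_sum {m : ℕ} (P : Matrix (Fin m) (Fin m) ℝ) (hsym : Pᵀ = P)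
    (hPP : P * P = P) (j : Fin m) : ∑ a, P a j ^ 2 = P j j := by
  have h : (P * P) j j = P j j := by rw [hPP]
  rw [← h, Matrix.mul_apply]
  apply Finset.sum_congr rfl
  intro a _
  have h2 : P j a = P a j := by
    conv_lhs => rw [← hsym]
    rw [Matrix.transpose_apply]
  rw [h2]; ring

lemma col_of_diag_one {m : ℕ} (P : Matrix (Fin m) (Fin m) ℝ) (hsym : Pᵀ = P)
    (hPP : P * P = P) (j : Fin m) (hjj : P j j = 1) :
    ∀ a, P a j = if a = j then 1 else 0 := by
  have hsum : ∑ a, (P a j - if a = j then 1 else 0) ^ 2 = 0 := by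
    have expand : ∀ a : Fin m, (P a j - if a = j then 1 else 0) ^ 2
        = P a j ^ 2 - 2 * (if a = j then P a j else 0) + (if a = j then 1 else 0) := by
      intro a
      by_cases h : a = j
      · simp only [if_pos h]; ring
      · simp only [if_neg h]; ring
    rw [Finset.sum_congr rfl (fun a _ => expand a), Finset.sum_add_distrib,
      Finset.sum_sub_distrib, col_sq_sum P hsym hPP, ← Finset.mul_sum,
      Finset.sum_ite_eq' Finset.univ j (fun x => P x j),
      Finset.sum_ite_eq' Finset.univ j (fun _ => (1:ℝ))]
    simp [hjj]
    norm_num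
  intro a
  have h1 : ∀ x ∈ Finset.univ, (0:ℝ) ≤ (P x j - if x = j then 1 else 0) ^ 2 := by
    intro x _; positivity
  have h2 := (Finset.sum_eq_zero_iff_of_nonneg h1).1 hsum a (Finset.mem_univ a)
  have h3 : P a j - (if a = j then 1 else 0) = 0 := by
    exact pow_eq_zero_iff (n := 2) (by norm_num) |>.1 h2
  linarith [h3]

lemma col_of_diag_zero {m : ℕ} (P : Matrix (Fin m) (Fin m) ℝ) (hsym : Pᵀ = P)
    (hPP : P * P = P) (j : Fin m) (hjj : P j j = 0) : ∀ a, P a j = 0 := by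
  have hsum : ∑ a, P a j ^ 2 = 0 := by rw [col_sq_sum P hsym hPP, hjj]
  intro a
  have h1 : ∀ x ∈ Finset.univ, (0:ℝ) ≤ P x j ^ 2 := by intro x _; positivity
  have h2 := (Finset.sum_eq_zero_iff_of_nonneg h1).1 hsum a (Finset.mem_univ a)
  exact pow_eq_zero_iff (n := 2) (by norm_num) |>.1 h2



lemma exists_projection {m n K : ℕ} (Y : Matrix (Fin m) (Fin n) ℝ) (hY : Y.rank ≤ K) :
    ∃ P : Matrix (Fin m) (Fin m) ℝ, Pᵀ = P ∧ P * P = P ∧ P * Y = Y ∧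
      (∀ i, 0 ≤ P i i) ∧ (∑ i, P i i) ≤ (K : ℝ) := by
  classical
  set E := EuclideanSpace ℝ (Fin m)
  set e : E ≃ₗ[ℝ] (Fin m → ℝ) := WithLp.linearEquiv 2 ℝ (Fin m → ℝ) with he
  set W : Submodule ℝ E := (LinearMap.range Y.mulVecLin).map (e.symm : (Fin m → ℝ) →ₗ[ℝ] E)
    with hW
  have hfinrank : Module.finrank ℝ W = Y.rank := by
    rw [hW, LinearEquiv.finrank_map_eq, Matrix.rank]
  set pr := W.orthogonalProjectionOnto with hpr
  set L : (Fin m → ℝ) →ₗ[ℝ] (Fin m → ℝ) :=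
    (e : E →ₗ[ℝ] (Fin m → ℝ)) ∘ₗ W.subtype ∘ₗ (pr : E →ₗ[ℝ] W) ∘ₗ
      (e.symm : (Fin m → ℝ) →ₗ[ℝ] E) with hL
  set P := LinearMap.toMatrix' L with hP
  -- basic facts
  have hLapp : ∀ x : Fin m → ℝ, L x = e ((pr (e.symm x) : E)) := fun x => rfl
  have hfix : ∀ x : Fin m → ℝ, x ∈ LinearMap.range Y.mulVecLin → L x = x := by
    intro x hx
    have hmem : e.symm x ∈ W := ⟨x, hx, rfl⟩
    rw [hLapp]
    rw [show pr (e.symm x) = (⟨e.symm x, hmem⟩ : W) from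
      Submodule.orthogonalProjectionOnto_mem_subspace_eq_self ⟨e.symm x, hmem⟩]
    simp
  -- idempotent
  have hLL : L ∘ₗ L = L := by
    apply LinearMap.ext
    intro x
    simp only [LinearMap.comp_apply]
    rw [hLapp, hLapp, e.symm_apply_apply]
    congr 1
    exact congrArg _ (Submodule.orthogonalProjectionOnto_mem_subspace_eq_self _)
  have hPP : P * P = P := by
    rw [hP, ← LinearMap.toMatrix'_comp, hLL]
  -- P * Y = Y
  have hPY : P * Y = Y := by
    ext i j
    have hcol : (fun a => Y a j) ∈ LinearMap.range Y.mulVecLin := by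
      refine ⟨Pi.single j 1, ?_⟩
      ext a
      simp [Matrix.mulVecLin, Matrix.mulVec, dotProduct, Pi.single_apply]
    have h1 : (P * Y) i j = (P *ᵥ (fun a => Y a j)) i := by
      simp [Matrix.mul_apply, Matrix.mulVec, dotProduct]
    have h2 : P *ᵥ (fun a => Y a j) = L (fun a => Y a j) := by
      rw [hP, ← Matrix.toLin'_apply, Matrix.toLin'_toMatrix']
    rw [h1, h2, hfix _ hcol]
  -- entries via inner products
  have hentry : ∀ i j, P i j = (inner ℝ (EuclideanSpace.single i (1:ℝ))
      ((pr (EuclideanSpace.single j (1:ℝ)) : E)) : ℝ) := by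
    intro i j
    have hs : (fun j' => if j' = j then (1:ℝ) else 0) = Pi.single j 1 := by
      ext a; simp [Pi.single_apply]
    have h1 : P i j = L (Pi.single j 1) i := by
      rw [hP, LinearMap.toMatrix'_apply]
    rw [h1, hLapp]
    have h2 : e.symm (Pi.single j 1) = EuclideanSpace.single j (1:ℝ) := rfl
    rw [h2]
    have h3 : ∀ v : E, e v = fun a => v a := fun v => rfl
    rw [EuclideanSpace.inner_single_left]
    simp [h3]
  have hsym : ∀ i j, P i j = P j i := by
    intro i j
    rw [hentry, hentry]
    refine (W.inner_starProjection_left_eq_right _ _).symm.trans ?_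
    exact real_inner_comm _ _
  -- orthonormal basis of W
  haveI : FiniteDimensional ℝ W := inferInstance
  set b := stdOrthonormalBasis ℝ W with hb
  have hproj_sum : ∀ u : E, (pr u : E) = ∑ k, (inner ℝ ((b k : E)) u : ℝ) • (b k : E) := by
    intro u
    rw [hpr, OrthonormalBasis.orthogonalProjectionOnto_apply_eq_sum b u]
    push_cast
    rfl
  have hdiag : ∀ i, P i i = ∑ k, ((b k : E) i)^2 := by
    intro i
    rw [hentry, hproj_sum]
    rw [inner_sum]
    apply Finset.sum_congr rfl
    intro k _
    rw [real_inner_smul_right, EuclideanSpace.inner_single_left]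
    have : (inner ℝ ((b k : E)) (EuclideanSpace.single i (1:ℝ)) : ℝ) = (b k : E) i := by
      rw [EuclideanSpace.inner_single_right]
      simp
    rw [this]
    simp [pow_two]
  have hdiag_nonneg : ∀ i, 0 ≤ P i i := by
    intro i
    rw [hdiag]
    apply Finset.sum_nonneg
    intro k _
    positivity
  have htrace : (∑ i, P i i) ≤ (K : ℝ) := by
    have h1 : (∑ i, P i i) = ∑ k, ∑ i, ((b k : E) i)^2 := by
      rw [Finset.sum_comm]
      exact Finset.sum_congr rfl fun i _ => hdiag i
    have h2 : ∀ k, ∑ i, ((b k : E) i)^2 = 1 := by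
      intro k
      have hn : (inner ℝ ((b k : E)) ((b k : E)) : ℝ) = 1 := by
        have := b.orthonormal.1 k
        rw [← Submodule.coe_inner]
        rw [real_inner_self_eq_norm_sq]
        rw [Submodule.coe_norm] at this ⊢
        rw [this]; norm_num
      rw [← hn, PiLp.inner_apply]
      apply Finset.sum_congr rfl
      intro i _
      simp [pow_two]
    rw [h1]
    have h3 : (∑ k, ∑ i, ((b k : E) i)^2) = (Module.finrank ℝ W : ℝ) := by
      rw [Finset.sum_congr rfl fun k _ => h2 k]
      simp
    rw [h3, hfinrank]
    exact_mod_cast hY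
  exact ⟨P, by ext i j; exact hsym j i, hPP, hPY, hdiag_nonneg, htrace⟩

lemma core {m n K : ℕ} (σ : ℕ → ℝ) (S Shat : Matrix (Fin m) (Fin n) ℝ)
    (hS : ∀ (i : Fin m) (j : Fin n), S i j = if (i:ℕ) = (j:ℕ) then σ (i:ℕ) else 0)
    (hShat : ∀ (i : Fin m) (j : Fin n),
      Shat i j = if (i:ℕ) = (j:ℕ) ∧ (j:ℕ) < K then σ (j:ℕ) else 0)
    (hσmono : ∀ i j : ℕ, i ≤ j → j < min m n → σ j ≤ σ i)
    (hσnonneg : ∀ i : ℕ, i < min m n → 0 ≤ σ i)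
    (hK1 : 1 ≤ K) (hK : K < min m n) (hgap : σ K < σ (K-1)) :
    frobSq (S - Shat) = ∑ t ∈ Finset.Ico K (min m n), σ t ^ 2 ∧
    ∀ Y : Matrix (Fin m) (Fin n) ℝ, Y.rank ≤ K →
      (∑ t ∈ Finset.Ico K (min m n), σ t ^ 2 ≤ frobSq (S - Y)) ∧
      (frobSq (S - Y) = ∑ t ∈ Finset.Ico K (min m n), σ t ^ 2 → Y = Shat) := by
  set N := min m n with hN
  have hNm : N ≤ m := min_le_left m n
  have hNn : N ≤ n := min_le_right m n
  have hsplitrange : ∀ f : ℕ → ℝ, ∑ t ∈ Finset.range N, f t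
      = ∑ t ∈ Finset.range K, f t + ∑ t ∈ Finset.Ico K N, f t := by
    intro f
    simp only [Finset.range_eq_Ico]
    exact (Finset.sum_Ico_consecutive _ (Nat.zero_le K) (le_of_lt hK)).symm
  constructor
  · -- value at Shat
    have hentry : ∀ (i : Fin m) (j : Fin n), ((S - Shat) i j) ^ 2
        = if (i:ℕ) = (j:ℕ) then (if (j:ℕ) < K then 0 else σ (j:ℕ) ^ 2) else 0 := by
      intro i j
      rw [Matrix.sub_apply, hS, hShat]
      by_cases h1 : (i:ℕ) = (j:ℕ)
      · by_cases h2 : (j:ℕ) < K <;> simp [h1, h2]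
      · simp [h1]
    show (∑ i, ∑ j, ((S - Shat) i j) ^ 2) = _
    rw [Finset.sum_comm]
    set f : ℕ → ℝ := fun t => if t < m then (if t < K then 0 else σ t ^ 2) else 0 with hf
    have hcol : ∀ j : Fin n, (∑ i, ((S - Shat) i j) ^ 2) = f (j : ℕ) := by
      intro j
      rw [Finset.sum_congr rfl (fun i _ => hentry i j),
        sum_fin_single (fun _ : Fin m => if (j:ℕ) < K then 0 else σ (j:ℕ) ^ 2) (j:ℕ)]
      by_cases h : (j:ℕ) < m
      · rw [dif_pos h]
        exact (if_pos h).symm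
      · rw [dif_neg h]
        exact (if_neg h).symm
    rw [Finset.sum_congr rfl (fun j _ => hcol j),
      sum_fin_dite (m := m) (n := n) f (fun t ht => if_neg (by omega)), hsplitrange f]
    have hz : ∑ t ∈ Finset.range K, f t = 0 := by
      apply Finset.sum_eq_zero
      intro t ht
      rw [Finset.mem_range] at ht
      rw [show f t = if t < K then 0 else σ t ^ 2 from if_pos (by omega), if_pos ht]
    rw [hz, zero_add]
    apply Finset.sum_congr rfl
    intro t ht
    rw [Finset.mem_Ico] at ht
    rw [show f t = if t < K then 0 else σ t ^ 2 from if_pos (by omega),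
      if_neg (by omega : ¬ t < K)]
  · -- lower bound and uniqueness
    intro Y hYrank
    obtain ⟨P, hsym, hPP, hPY, hdnn, htr⟩ := exists_projection Y hYrank
    set Q : Matrix (Fin m) (Fin m) ℝ := 1 - P with hQ
    have hQsym : Qᵀ = Q := by rw [hQ, Matrix.transpose_sub, Matrix.transpose_one, hsym]
    have hPQzero : Q * P = 0 := by
      rw [hQ, Matrix.sub_mul, Matrix.one_mul, hPP, sub_self]
    have hQY : Q * Y = 0 := by
      rw [hQ, Matrix.sub_mul, Matrix.one_mul, hPY, sub_self]
    have hQQ : Q * Q = Q := by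
      rw [hQ, Matrix.mul_sub, Matrix.mul_one, Matrix.sub_mul, Matrix.one_mul, hPP]
      abel
    have hQS : Q * S = S - P * S := by rw [hQ, Matrix.sub_mul, Matrix.one_mul]
    have hdecomp : S - Y = Q * S + (P * S - Y) := by rw [hQS]; abel
    have hcross : Matrix.trace ((Q * S)ᵀ * (P * S - Y)) = 0 := by
      have h1 : (Q * S)ᵀ * (P * S - Y) = Sᵀ * (Q * (P * S - Y)) := by
        rw [Matrix.transpose_mul, hQsym, Matrix.mul_assoc]
      have h2 : Q * (P * S - Y) = 0 := by
        rw [Matrix.mul_sub, ← Matrix.mul_assoc, hPQzero, hQY, Matrix.zero_mul, sub_self]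
      rw [h1, h2, Matrix.mul_zero, Matrix.trace_zero]
    have hpyth : frobSq (S - Y) = frobSq (Q * S) + frobSq (P * S - Y) := by
      rw [hdecomp]
      exact pythagoras _ _ hcross
    -- the diagonal q
    set q : ℕ → ℝ := fun t => if h : t < m then P ⟨t, h⟩ ⟨t, h⟩ else 0 with hq
    have hqpos : ∀ (t : ℕ) (h : t < m), q t = P ⟨t, h⟩ ⟨t, h⟩ := fun t h => dif_pos h
    have hqneg : ∀ (t : ℕ), ¬ t < m → q t = 0 := fun t h => dif_neg h
    have hq0 : ∀ t, 0 ≤ q t := by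
      intro t
      by_cases h : t < m
      · rw [hqpos t h]; exact hdnn _
      · rw [hqneg t h]
    have hPle1 : ∀ i : Fin m, P i i ≤ 1 := by
      intro i
      have h1 : P i i ^ 2 ≤ ∑ a, P a i ^ 2 := by
        apply Finset.single_le_sum (f := fun a => P a i ^ 2)
          (fun a _ => by positivity) (Finset.mem_univ i)
      rw [col_sq_sum P hsym hPP i] at h1
      nlinarith [hdnn i]
    have hq1 : ∀ t, q t ≤ 1 := by
      intro t
      by_cases h : t < m
      · rw [hqpos t h]; exact hPle1 _
      · rw [hqneg t h]; norm_num
    have hqsum : ∑ t ∈ Finset.range N, q t ≤ (K : ℝ) := by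
      have h1 : ∑ t ∈ Finset.range m, q t = ∑ i : Fin m, P i i := by
        rw [← Fin.sum_univ_eq_sum_range]
        exact Finset.sum_congr rfl (fun i _ => hqpos (i:ℕ) i.2)
      have h2 : ∑ t ∈ Finset.range N, q t ≤ ∑ t ∈ Finset.range m, q t :=
        Finset.sum_le_sum_of_subset_of_nonneg (Finset.range_subset_range.2 hNm)
          (fun t _ _ => hq0 t)
      calc ∑ t ∈ Finset.range N, q t ≤ ∑ t ∈ Finset.range m, q t := h2
        _ = ∑ i : Fin m, P i i := h1
        _ ≤ (K : ℝ) := htr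
    -- frobSq (Q * S)
    set g : ℕ → ℝ := fun t => if t < m then σ t ^ 2 * (1 - q t) else 0 with hg
    have hgpos : ∀ (t : ℕ), t < m → g t = σ t ^ 2 * (1 - q t) := fun t h => if_pos h
    have hgneg : ∀ (t : ℕ), ¬ t < m → g t = 0 := fun t h => if_neg h
    have hQSval : frobSq (Q * S) = ∑ t ∈ Finset.range N, σ t ^ 2 * (1 - q t) := by
      show (∑ i, ∑ j, ((Q * S) i j) ^ 2) = _
      rw [Finset.sum_comm]
      have hcol : ∀ j : Fin n, (∑ i, ((Q * S) i j) ^ 2) = g (j : ℕ) := by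
        intro j
        by_cases h : (j:ℕ) < m
        · have hterm : ∀ i : Fin m, ((Q * S) i j) ^ 2
              = σ (j:ℕ) ^ 2 * Q i ⟨(j:ℕ), h⟩ ^ 2 := by
            intro i
            rw [mul_diag_apply σ S hS Q i j, dif_pos h]
            ring
          rw [Finset.sum_congr rfl (fun i _ => hterm i), ← Finset.mul_sum,
            col_sq_sum Q hQsym hQQ ⟨(j:ℕ), h⟩]
          have hQd : Q ⟨(j:ℕ), h⟩ ⟨(j:ℕ), h⟩ = 1 - q (j:ℕ) := by
            rw [hQ, Matrix.sub_apply, Matrix.one_apply_eq, hqpos (j:ℕ) h]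
          rw [hQd, hgpos (j:ℕ) h]
        · have hterm : ∀ i : Fin m, ((Q * S) i j) ^ 2 = 0 := by
            intro i
            rw [mul_diag_apply σ S hS Q i j, dif_neg h]
            norm_num
          rw [Finset.sum_congr rfl (fun i _ => hterm i), Finset.sum_const_zero,
            hgneg (j:ℕ) h]
      rw [Finset.sum_congr rfl (fun j _ => hcol j),
        sum_fin_dite (m := m) (n := n) g (fun t ht => hgneg t (by omega))]
      exact Finset.sum_congr rfl (fun t ht => hgpos t
        (by have := Finset.mem_range.1 ht; omega))
    obtain ⟨hLB, hEQ⟩ := scalar_ineq N K σ q hσmono hσnonneg hK1 hK hgap hq0 hq1 hqsum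
    constructor
    · -- lower bound
      rw [hpyth, hQSval]
      have := frobSq_nonneg (P * S - Y)
      linarith
    · -- uniqueness
      intro heq
      have hPSY0 : frobSq (P * S - Y) = 0 := by
        rw [hpyth, hQSval] at heq
        have := frobSq_nonneg (P * S - Y)
        linarith
      have hYPS : Y = P * S := (sub_eq_zero.1 (frobSq_eq_zero hPSY0)).symm
      have hQSeq : (∑ t ∈ Finset.range N, σ t ^ 2 * (1 - q t))
          = ∑ t ∈ Finset.Ico K N, σ t ^ 2 := by
        rw [hpyth, hQSval] at heq
        have := frobSq_nonneg (P * S - Y)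
        linarith
      obtain ⟨hq1K, hq0K⟩ := hEQ hQSeq
      rw [hYPS]
      ext i j
      rw [mul_diag_apply σ S hS P i j, hShat]
      by_cases h : (j:ℕ) < m
      · rw [dif_pos h]
        by_cases h2 : (j:ℕ) < K
        · have hPjj : P ⟨(j:ℕ), h⟩ ⟨(j:ℕ), h⟩ = 1 := by
            have h5 := hq1K (j:ℕ) h2
            rwa [hqpos (j:ℕ) h] at h5
          have hcolP := col_of_diag_one P hsym hPP ⟨(j:ℕ), h⟩ hPjj i
          rw [hcolP]
          by_cases h3 : (i:ℕ) = (j:ℕ)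
          · rw [if_pos (Fin.ext h3 : i = ⟨(j:ℕ), h⟩), if_pos ⟨h3, h2⟩, one_mul]
          · rw [if_neg (fun hc => h3 (congrArg Fin.val hc)),
              if_neg (fun hc => h3 hc.1), zero_mul]
        · have hjN : (j:ℕ) < N := lt_min h j.2
          have hPjj : P ⟨(j:ℕ), h⟩ ⟨(j:ℕ), h⟩ = 0 := by
            have h5 := hq0K (j:ℕ) (by omega) hjN
            rwa [hqpos (j:ℕ) h] at h5
          rw [col_of_diag_zero P hsym hPP ⟨(j:ℕ), h⟩ hPjj i, zero_mul,
            if_neg (fun hc => h2 hc.2)]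
      · rw [dif_neg h, if_neg]
        rintro ⟨h1, h2⟩
        exact h (by omega)


end EYM

open EYM in
/-- Eckart–Young–Mirsky theorem (uniqueness part): if `σ_K > σ_{K+1}`
(in 1-based indexing, i.e. `σ (K-1) > σ K` in the 0-based indexing used here),
then the truncated SVD `X* = ∑_{k<K} σ_k u_k v_kᵀ` is the unique minimizer of
`‖A − X‖_F` over matrices `X` of rank at most `K`. -/
theorem eckart_young_mirsky_uniqueness {m n : ℕ}
    (A : Matrix (Fin m) (Fin n) ℝ)
    (U : Matrix (Fin m) (Fin m) ℝ) (V : Matrix (Fin n) (Fin n) ℝ)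
    (S : Matrix (Fin m) (Fin n) ℝ) (σ : ℕ → ℝ) (K : ℕ)
    (hU : Uᵀ * U = 1) (hV : Vᵀ * V = 1)
    (hA : A = U * S * Vᵀ)
    (hS : ∀ (i : Fin m) (j : Fin n), S i j = if (i : ℕ) = (j : ℕ) then σ (i : ℕ) else 0)
    (hσmono : ∀ i j : ℕ, i ≤ j → j < min m n → σ j ≤ σ i)
    (hσnonneg : ∀ i : ℕ, i < min m n → 0 ≤ σ i)
    (hK1 : 1 ≤ K) (hK : K < min m n)
    (hgap : σ K < σ (K - 1))
    (Xstar : Matrix (Fin m) (Fin n) ℝ)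
    (hXstar : Xstar = ∑ k : Fin K,
      σ (k : ℕ) •
        Matrix.vecMulVec
          (fun i => U i ⟨(k : ℕ), lt_of_lt_of_le k.2 ((le_of_lt hK).trans (min_le_left m n))⟩)
          (fun j => V j ⟨(k : ℕ), lt_of_lt_of_le k.2 ((le_of_lt hK).trans (min_le_right m n))⟩)) :
    (Xstar.rank ≤ K ∧
      ∀ X : Matrix (Fin m) (Fin n) ℝ, X.rank ≤ K →
        frob (A - Xstar) ≤ frob (A - X)) ∧
      ∀ X : Matrix (Fin m) (Fin n) ℝ, X.rank ≤ K →
        (∀ Z : Matrix (Fin m) (Fin n) ℝ, Z.rank ≤ K → frob (A - X) ≤ frob (A - Z)) →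
        X = Xstar := by
  classical
  set N := min m n with hN
  have hNm : N ≤ m := min_le_left m n
  have hNn : N ≤ n := min_le_right m n
  have hKm : K < m := lt_of_lt_of_le hK hNm
  have hKn : K < n := lt_of_lt_of_le hK hNn
  set Shat : Matrix (Fin m) (Fin n) ℝ :=
    Matrix.of (fun i j => if (i:ℕ) = (j:ℕ) ∧ (j:ℕ) < K then σ (j:ℕ) else 0) with hShatdef
  have hShat : ∀ (i : Fin m) (j : Fin n),
      Shat i j = if (i:ℕ) = (j:ℕ) ∧ (j:ℕ) < K then σ (j:ℕ) else 0 := fun i j => rfl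
  have hUU : U * Uᵀ = 1 := mul_eq_one_comm.1 hU
  have hVV : V * Vᵀ = 1 := mul_eq_one_comm.1 hV
  have hdetU : IsUnit U.det ∧ IsUnit Uᵀ.det := by
    have h1 : Uᵀ.det * U.det = 1 := by rw [← Matrix.det_mul, hU, Matrix.det_one]
    exact ⟨IsUnit.of_mul_eq_one _ (by rwa [mul_comm] at h1), IsUnit.of_mul_eq_one _ h1⟩
  have hdetV : IsUnit V.det ∧ IsUnit Vᵀ.det := by
    have h1 : Vᵀ.det * V.det = 1 := by rw [← Matrix.det_mul, hV, Matrix.det_one]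
    exact ⟨IsUnit.of_mul_eq_one _ (by rwa [mul_comm] at h1), IsUnit.of_mul_eq_one _ h1⟩
  have hrank_conj : ∀ M : Matrix (Fin m) (Fin n) ℝ, (U * M * Vᵀ).rank = M.rank := by
    intro M
    rw [Matrix.mul_assoc, Matrix.rank_mul_eq_right_of_isUnit_det U _ hdetU.1]
    exact Matrix.rank_mul_eq_left_of_isUnit_det Vᵀ M hdetV.2
  have hXYrank : ∀ X : Matrix (Fin m) (Fin n) ℝ, (Uᵀ * X * V).rank = X.rank := by
    intro X
    rw [Matrix.mul_assoc, Matrix.rank_mul_eq_right_of_isUnit_det Uᵀ _ hdetU.2]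
    exact Matrix.rank_mul_eq_left_of_isUnit_det V X hdetV.1
  have hXrec : ∀ X : Matrix (Fin m) (Fin n) ℝ, U * (Uᵀ * X * V) * Vᵀ = X := by
    intro X
    calc U * (Uᵀ * X * V) * Vᵀ = U * (Uᵀ * (X * (V * Vᵀ))) := by
          simp only [Matrix.mul_assoc]
      _ = X := by rw [hVV, Matrix.mul_one, ← Matrix.mul_assoc, hUU, Matrix.one_mul]
  obtain ⟨hSval, hYforall⟩ :=
    core σ S Shat hS hShat hσmono hσnonneg hK1 hK hgap
  -- Xstar = U * Shat * Vᵀ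
  have hXstarShat : Xstar = U * Shat * Vᵀ := by
    rw [hXstar]
    ext i j
    set F : ℕ → ℝ := fun t => if h1 : t < m then (if h2 : t < n then
      (if t < K then σ t else 0) * (U i ⟨t, h1⟩ * V j ⟨t, h2⟩) else 0) else 0 with hF
    have hUS : ∀ b : Fin n, (U * Shat) i b
        = if h : (b:ℕ) < m then
            U i ⟨(b:ℕ), h⟩ * (if (b:ℕ) < K then σ (b:ℕ) else 0) else 0 := by
      intro b
      rw [Matrix.mul_apply]
      have h1 : ∀ a : Fin m, U i a * Shat a b
          = if (a:ℕ) = (b:ℕ) then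
              (fun c : Fin m => U i c * (if (b:ℕ) < K then σ (b:ℕ) else 0)) a else 0 := by
        intro a
        rw [hShat]
        by_cases hab : (a:ℕ) = (b:ℕ)
        · by_cases hbK : (b:ℕ) < K <;> simp [hab, hbK]
        · simp [hab]
      rw [Finset.sum_congr rfl (fun a _ => h1 a), sum_fin_single]
    have hRHS : (U * Shat * Vᵀ) i j = ∑ t ∈ Finset.range N, F t := by
      rw [Matrix.mul_apply]
      have h2 : ∀ b : Fin n, (U * Shat) i b * Vᵀ b j = F (b:ℕ) := by
        intro b
        rw [hUS b, Matrix.transpose_apply]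
        by_cases h : (b:ℕ) < m
        · have hFb : F (b:ℕ) = (if (b:ℕ) < K then σ (b:ℕ) else 0)
              * (U i ⟨(b:ℕ), h⟩ * V j ⟨(b:ℕ), b.2⟩) := (dif_pos h).trans (dif_pos b.2)
          have hVb : V j (⟨(b:ℕ), b.2⟩ : Fin n) = V j b := rfl
          rw [hFb, hVb, dif_pos h]
          ring
        · rw [dif_neg h, zero_mul]
          exact ((dif_neg h : F (b:ℕ) = 0)).symm
      rw [Finset.sum_congr rfl (fun b _ => h2 b),
        sum_fin_dite (m := m) (n := n) F (fun t ht => dif_neg (by omega))]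
    have hKsub : ∑ t ∈ Finset.range N, F t = ∑ t ∈ Finset.range K, F t := by
      symm
      apply Finset.sum_subset (Finset.range_subset_range.2 (le_of_lt hK))
      intro t ht hnt
      rw [Finset.mem_range] at ht
      rw [Finset.mem_range] at hnt
      have h1 : t < m := by omega
      have h2 : t < n := by omega
      have hFt : F t = (if t < K then σ t else 0) * (U i ⟨t, h1⟩ * V j ⟨t, h2⟩) :=
        (dif_pos h1).trans (dif_pos h2)
      rw [hFt, if_neg (by omega), zero_mul]
    rw [hRHS, hKsub, Matrix.sum_apply]
    refine Finset.sum_congr rfl (fun k _ => ?_) |>.trans (Fin.sum_univ_eq_sum_range F K)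
    have hkm : (k:ℕ) < m := lt_trans k.2 hKm
    have hkn : (k:ℕ) < n := lt_trans k.2 hKn
    have hFk : F (k:ℕ) = (if (k:ℕ) < K then σ (k:ℕ) else 0)
        * (U i ⟨(k:ℕ), hkm⟩ * V j ⟨(k:ℕ), hkn⟩) := (dif_pos hkm).trans (dif_pos hkn)
    rw [hFk, if_pos k.2, Matrix.smul_apply, Matrix.vecMulVec_apply]
    show σ (k:ℕ) * (U i ⟨(k:ℕ), _⟩ * V j ⟨(k:ℕ), _⟩) = _
    ring
  -- rank of Shat
  have hrankShat : Shat.rank ≤ K := by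
    set B : Matrix (Fin m) (Fin K) ℝ :=
      Matrix.of (fun i k => if (i:ℕ) = (k:ℕ) then 1 else 0) with hB
    set C : Matrix (Fin K) (Fin n) ℝ :=
      Matrix.of (fun k j => if (k:ℕ) = (j:ℕ) then σ (j:ℕ) else 0) with hC
    have hBC : Shat = B * C := by
      ext i j
      rw [Matrix.mul_apply, hShat]
      have h1 : ∀ k : Fin K, B i k * C k j
          = if (k:ℕ) = (j:ℕ) then
              (fun c : Fin K => if (i:ℕ) = (c:ℕ) then σ (j:ℕ) else 0) k else 0 := by
        intro k
        show (if (i:ℕ) = (k:ℕ) then (1:ℝ) else 0) * (if (k:ℕ) = (j:ℕ) then σ (j:ℕ) else 0) = _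
        by_cases hik : (i:ℕ) = (k:ℕ) <;> by_cases hkj : (k:ℕ) = (j:ℕ) <;>
          simp [hik, hkj]
      rw [Finset.sum_congr rfl (fun k _ => h1 k), sum_fin_single]
      by_cases hjK : (j:ℕ) < K
      · rw [dif_pos hjK]
        by_cases hij : (i:ℕ) = (j:ℕ)
        · rw [if_pos ⟨hij, hjK⟩]
          exact (if_pos hij).symm
        · rw [if_neg (fun hc => hij hc.1)]
          exact (if_neg hij).symm
      · rw [dif_neg hjK, if_neg (fun hc => hjK hc.2)]
    rw [hBC]
    calc (B * C).rank ≤ B.rank ⊓ C.rank := Matrix.rank_mul_le B C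
      _ ≤ B.rank := inf_le_left
      _ ≤ Fintype.card (Fin K) := Matrix.rank_le_card_width B
      _ = K := Fintype.card_fin K
  have hrankXstar : Xstar.rank ≤ K := by
    rw [hXstarShat, hrank_conj Shat]
    exact hrankShat
  -- frobenius values
  have hAXstar : A - Xstar = U * (S - Shat) * Vᵀ := by
    rw [hA, hXstarShat, Matrix.mul_sub, Matrix.sub_mul]
  have hfrobXstar : frobSq (A - Xstar) = ∑ t ∈ Finset.Ico K N, σ t ^ 2 := by
    rw [hAXstar, frobSq_conj U V hU hV, hSval]
  have hmin2 : ∀ X : Matrix (Fin m) (Fin n) ℝ, X.rank ≤ K →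
      frob (A - Xstar) ≤ frob (A - X) := by
    intro X hX
    set Y : Matrix (Fin m) (Fin n) ℝ := Uᵀ * X * V with hY
    have hYrank : Y.rank ≤ K := by rw [hY, hXYrank X]; exact hX
    have hAX : A - X = U * (S - Y) * Vᵀ := by
      conv_lhs => rw [hA, ← hXrec X]
      rw [Matrix.mul_sub, Matrix.sub_mul]
    apply frob_le_frob
    rw [hfrobXstar, hAX, frobSq_conj U V hU hV]
    exact (hYforall Y hYrank).1
  refine ⟨⟨hrankXstar, hmin2⟩, ?_⟩
  intro X hX hmin
  set Y : Matrix (Fin m) (Fin n) ℝ := Uᵀ * X * V with hY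
  have hYrank : Y.rank ≤ K := by rw [hY, hXYrank X]; exact hX
  have hAX : A - X = U * (S - Y) * Vᵀ := by
    conv_lhs => rw [hA, ← hXrec X]
    rw [Matrix.mul_sub, Matrix.sub_mul]
  have h1 : frob (A - X) ≤ frob (A - Xstar) := hmin Xstar hrankXstar
  have h2 : frob (A - Xstar) ≤ frob (A - X) := hmin2 X hX
  have h3 : frobSq (A - X) = frobSq (A - Xstar) :=
    le_antisymm (frobSq_le_of_frob_le h1) (frobSq_le_of_frob_le h2)
  have h4 : frobSq (S - Y) = ∑ t ∈ Finset.Ico K N, σ t ^ 2 := by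
    rw [← frobSq_conj U V hU hV (S - Y), ← hAX, h3, hfrobXstar]
  have h5 : Y = Shat := (hYforall Y hYrank).2 h4
  calc X = U * (Uᵀ * X * V) * Vᵀ := (hXrec X).symm
    _ = U * Shat * Vᵀ := by rw [← hY, h5]
    _ = Xstar := hXstarShat.symm
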